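/- Let d ≥ 2 and let s and t be n-tuples of transpositions in S_d = Equiv.Perm (Fin d), each of which is transitive (the subgroup generated by the entries acts transitively on Fin d), and suppose their total monodromies are equal: s_1 s_2 ⋯ s_n = t_1 t_2 ⋯ t_n. Then s and t are Hurwitz equivalent: some finite composition of Hurwitz moves H_i and their inverses carries s to t. (This is the algebraic content of the paper's claim in Section 3 that, for fixed n and d, the coloured braid groupoid splits into connected components indexed by the total monodromy μ, so that the set T(μ) of labelings with product μ forms a single connected component.) -/

import Mathlib

/-- The `i`-th Hurwitz move on `n`-tuples in a group `G` (indices `0`-based: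
this acts on the entries at positions `i` and `i+1`): it replaces the pair
`(a, b)` at positions `(i, i+1)` by `(a * b * a⁻¹, a)` and leaves all other
entries unchanged. -/
def hmove {G : Type*} [Group G] {n : ℕ} (i : ℕ) (hi : i + 1 < n) (t : Fin n → G) :
    Fin n → G := fun j =>
  if (j : ℕ) = i then t ⟨i, by omega⟩ * t ⟨i + 1, hi⟩ * (t ⟨i, by omega⟩)⁻¹
  else if (j : ℕ) = i + 1 then t ⟨i, by omega⟩
  else t j

/-- One elementary Hurwitz step between tuples: applying a single Hurwitz move
or the inverse of a single Hurwitz move. -/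
def hstep {G : Type*} [Group G] {n : ℕ} (s t : Fin n → G) : Prop :=
  ∃ (i : ℕ) (hi : i + 1 < n), t = hmove i hi s ∨ s = hmove i hi t

/-- Two tuples are Hurwitz equivalent if some finite composition of Hurwitz
moves and their inverses carries one to the other. -/
def HurwitzEquiv {G : Type*} [Group G] {n : ℕ} (s t : Fin n → G) : Prop :=
  Relation.ReflTransGen hstep s t

set_option linter.unusedSectionVars false

namespace HurwitzAux

variable {G : Type*} [Group G]

/-- One Hurwitz step on lists. -/
def lstep (l l' : List G) : Prop :=
  ∃ (l₁ : List G) (a b : G) (l₂ : List G),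
    (l = l₁ ++ a :: b :: l₂ ∧ l' = l₁ ++ (a*b*a⁻¹) :: a :: l₂) ∨
    (l' = l₁ ++ a :: b :: l₂ ∧ l = l₁ ++ (a*b*a⁻¹) :: a :: l₂)

def LHR : List G → List G → Prop := Relation.ReflTransGen lstep

theorem lstep.symm {l l' : List G} (h : lstep l l') : lstep l' l := by
  obtain ⟨l₁, a, b, l₂, h | h⟩ := h
  · exact ⟨l₁, a, b, l₂, Or.inr ⟨h.1, h.2⟩⟩
  · exact ⟨l₁, a, b, l₂, Or.inl ⟨h.1, h.2⟩⟩

theorem LHR.refl (l : List G) : LHR l l := Relation.ReflTransGen.refl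

theorem LHR.symm {l l' : List G} (h : LHR l l') : LHR l' l :=
  (@Relation.ReflTransGen.stdSymm _ lstep ⟨fun _ _ h => h.symm⟩).symm _ _ h

theorem LHR.trans {l l' l'' : List G} (h : LHR l l') (h' : LHR l' l'') : LHR l l'' :=
  Relation.ReflTransGen.trans h h'

theorem lstep.cons {l l' : List G} (a : G) (h : lstep l l') : lstep (a :: l) (a :: l') := by
  obtain ⟨l₁, x, y, l₂, h | h⟩ := h
  · exact ⟨a :: l₁, x, y, l₂, Or.inl (by simp [h.1, h.2])⟩
  · exact ⟨a :: l₁, x, y, l₂, Or.inr (by simp [h.1, h.2])⟩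

theorem LHR.cons {l l' : List G} (a : G) (h : LHR l l') : LHR (a :: l) (a :: l') := by
  induction h with
  | refl => exact LHR.refl _
  | tail _ h2 ih => exact ih.trans (Relation.ReflTransGen.single (h2.cons a))

theorem LHR.append_left (m : List G) {l l' : List G} (h : LHR l l') :
    LHR (m ++ l) (m ++ l') := by
  induction m with
  | nil => simpa using h
  | cons a m ih => simpa using ih.cons a

theorem lstep.append_right {l l' : List G} (m : List G) (h : lstep l l') :
    lstep (l ++ m) (l' ++ m) := by
  obtain ⟨l₁, x, y, l₂, h | h⟩ := h
  · exact ⟨l₁, x, y, l₂ ++ m, Or.inl (by simp [h.1, h.2])⟩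
  · exact ⟨l₁, x, y, l₂ ++ m, Or.inr (by simp [h.1, h.2])⟩

theorem LHR.append_right {l l' : List G} (m : List G) (h : LHR l l') :
    LHR (l ++ m) (l' ++ m) := by
  induction h with
  | refl => exact LHR.refl _
  | tail _ h2 ih => exact ih.trans (Relation.ReflTransGen.single (h2.append_right m))

theorem LHR.basic (a b : G) (l : List G) : LHR (a :: b :: l) ((a*b*a⁻¹) :: a :: l) :=
  Relation.ReflTransGen.single ⟨[], a, b, l, Or.inl ⟨rfl, rfl⟩⟩

theorem LHR.basic' (a b : G) (l : List G) : LHR (a :: b :: l) (b :: (b⁻¹*a*b) :: l) := by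
  have := (LHR.basic b (b⁻¹*a*b) l).symm
  have e : b * (b⁻¹*a*b) * b⁻¹ = a := by group
  rwa [e] at this

theorem lstep.length {l l' : List G} (h : lstep l l') : l.length = l'.length := by
  obtain ⟨l₁, x, y, l₂, h | h⟩ := h <;> simp [h.1, h.2]

theorem LHR.length {l l' : List G} (h : LHR l l') : l.length = l'.length := by
  induction h with
  | refl => rfl
  | tail _ h2 ih => exact ih.trans h2.length

theorem lstep.prod {l l' : List G} (h : lstep l l') : l.prod = l'.prod := by
  obtain ⟨l₁, x, y, l₂, h | h⟩ := h <;>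
    simp [h.1, h.2, List.prod_append, mul_assoc]

theorem LHR.prod {l l' : List G} (h : LHR l l') : l.prod = l'.prod := by
  induction h with
  | refl => rfl
  | tail _ h2 ih => exact ih.trans h2.prod

theorem lstep.closure_le {l l' : List G} (h : lstep l l') :
    Subgroup.closure {x | x ∈ l'} ≤ Subgroup.closure {x | x ∈ l} := by
  have key : ∀ (l₁ : List G) (a b : G) (l₂ : List G),
      Subgroup.closure {x | x ∈ l₁ ++ (a*b*a⁻¹) :: a :: l₂} ≤
        Subgroup.closure {x | x ∈ l₁ ++ a :: b :: l₂} := by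
    intro l₁ a b l₂
    apply Subgroup.closure_le _ |>.mpr
    intro x hx
    simp only [Set.mem_setOf_eq, List.mem_append, List.mem_cons] at hx
    have ha : a ∈ Subgroup.closure {x | x ∈ l₁ ++ a :: b :: l₂} :=
      Subgroup.subset_closure (by simp)
    have hb : b ∈ Subgroup.closure {x | x ∈ l₁ ++ a :: b :: l₂} :=
      Subgroup.subset_closure (by simp)
    rcases hx with h1 | h1 | h1 | h1
    · exact Subgroup.subset_closure (by simp [h1])
    · subst h1; exact mul_mem (mul_mem ha hb) (inv_mem ha)
    · subst h1; exact ha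
    · exact Subgroup.subset_closure (by simp [h1])
  obtain ⟨l₁, a, b, l₂, ⟨h1, h2⟩ | ⟨h1, h2⟩⟩ := h
  · subst h1; subst h2; exact key l₁ a b l₂
  · subst h1; subst h2
    apply Subgroup.closure_le _ |>.mpr
    intro x hx
    simp only [Set.mem_setOf_eq, List.mem_append, List.mem_cons] at hx
    have hab : a*b*a⁻¹ ∈ Subgroup.closure {x | x ∈ l₁ ++ (a*b*a⁻¹) :: a :: l₂} :=
      Subgroup.subset_closure (by simp)
    have ha : a ∈ Subgroup.closure {x | x ∈ l₁ ++ (a*b*a⁻¹) :: a :: l₂} :=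
      Subgroup.subset_closure (by simp)
    rcases hx with h1 | h1 | h1 | h1
    · exact Subgroup.subset_closure (by simp [h1])
    · subst h1; exact ha
    · have e : x = a⁻¹ * (a*b*a⁻¹) * a := by rw [h1]; group
      rw [e]; exact mul_mem (mul_mem (inv_mem ha) hab) ha
    · exact Subgroup.subset_closure (by simp [h1])

theorem LHR.closure_eq {l l' : List G} (h : LHR l l') :
    Subgroup.closure {x | x ∈ l} = Subgroup.closure {x | x ∈ l'} := by
  induction h with
  | refl => rfl
  | tail _ h2 ih => exact ih.trans (le_antisymm h2.symm.closure_le h2.closure_le)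



/-- Pull an entry to the front, conjugating it by the product of the prefix. -/
theorem LHR.pull_front (l₁ : List G) (a : G) (l₂ : List G) :
    LHR (l₁ ++ a :: l₂) ((l₁.prod * a * l₁.prod⁻¹) :: (l₁ ++ l₂)) := by
  induction l₁ with
  | nil => simp [LHR.refl]
  | cons b m ih =>
    have h1 : LHR (b :: (m ++ a :: l₂)) (b :: (m.prod * a * m.prod⁻¹) :: (m ++ l₂)) :=
      (ih).cons b
    have h2 := LHR.basic b (m.prod * a * m.prod⁻¹) (m ++ l₂)
    have e : b * (m.prod * a * m.prod⁻¹) * b⁻¹ =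
        (b :: m).prod * a * ((b :: m).prod)⁻¹ := by
      simp [List.prod_cons, mul_assoc]
    rw [e] at h2
    simpa using h1.trans h2

/-- An adjacent equal pair of involutions slides one step to the right. -/
theorem LHR.pair_step (a b : G) (ha : a * a = 1) (l : List G) :
    LHR (a :: a :: b :: l) (b :: a :: a :: l) := by
  have h1 : LHR (a :: a :: b :: l) (a :: (a*b*a⁻¹) :: a :: l) := (LHR.basic a b l).cons a
  have h2 := LHR.basic a (a*b*a⁻¹) (a :: l)
  have hinv : a⁻¹ = a := by
    rw [inv_eq_iff_mul_eq_one]; exact ha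
  have e : a * (a*b*a⁻¹) * a⁻¹ = b := by
    rw [hinv]
    calc a * (a * b * a) * a = (a*a) * b * (a*a) := by group
    _ = b := by rw [ha]; group
  rw [e] at h2
  exact h1.trans h2

/-- An adjacent equal pair of involutions slides freely. -/
theorem LHR.pair_slide (a : G) (ha : a * a = 1) (p q : List G) :
    LHR (a :: a :: (p ++ q)) (p ++ a :: a :: q) := by
  induction p with
  | nil => exact LHR.refl _
  | cons b m ih =>
    have h1 : LHR (a :: a :: b :: (m ++ q)) (b :: a :: a :: (m ++ q)) :=
      LHR.pair_step a b ha (m ++ q)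
    exact h1.trans (ih.cons b)

/-- Conjugating an adjacent equal pair by an entry of the tail. -/
theorem LHR.pair_conj_entry {c : G} {l : List G} (hc : c ∈ l) (a : G) (ha : a * a = 1) :
    LHR (a :: a :: l) ((c⁻¹*a*c) :: (c⁻¹*a*c) :: l) := by
  obtain ⟨l₁, l₂, rfl⟩ := List.append_of_mem hc
  have h1 : LHR (a :: a :: (l₁ ++ c :: l₂)) (l₁ ++ a :: a :: c :: l₂) :=
    LHR.pair_slide a ha l₁ (c :: l₂)
  have h2 : LHR (a :: a :: c :: l₂) (a :: c :: (c⁻¹*a*c) :: l₂) :=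
    (LHR.basic' a c l₂).cons a
  have h3 : LHR (a :: c :: (c⁻¹*a*c) :: l₂) (c :: (c⁻¹*a*c) :: (c⁻¹*a*c) :: l₂) :=
    LHR.basic' a c ((c⁻¹*a*c) :: l₂)
  have h4 : LHR (l₁ ++ a :: a :: c :: l₂) (l₁ ++ c :: (c⁻¹*a*c) :: (c⁻¹*a*c) :: l₂) :=
    LHR.append_left l₁ (h2.trans h3)
  have ha' : (c⁻¹*a*c) * (c⁻¹*a*c) = 1 := by
    calc (c⁻¹*a*c) * (c⁻¹*a*c) = c⁻¹ * (a*a) * c := by group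
    _ = 1 := by rw [ha]; group
  have h5 : LHR ((c⁻¹*a*c) :: (c⁻¹*a*c) :: ((l₁ ++ [c]) ++ l₂))
      ((l₁ ++ [c]) ++ (c⁻¹*a*c) :: (c⁻¹*a*c) :: l₂) :=
    LHR.pair_slide _ ha' (l₁ ++ [c]) l₂
  have e1 : (l₁ ++ [c]) ++ l₂ = l₁ ++ c :: l₂ := by simp
  have e2 : (l₁ ++ [c]) ++ (c⁻¹*a*c) :: (c⁻¹*a*c) :: l₂
      = l₁ ++ c :: (c⁻¹*a*c) :: (c⁻¹*a*c) :: l₂ := by simp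
  rw [e1, e2] at h5
  exact (h1.trans h4).trans h5.symm

/-- Conjugating an adjacent equal pair by any element of the closure of the tail's entries. -/
theorem LHR.pair_conj_closure {l : List G} {g : G}
    (hg : g ∈ Subgroup.closure {x | x ∈ l}) (a : G) (ha : a * a = 1) :
    LHR (a :: a :: l) ((g*a*g⁻¹) :: (g*a*g⁻¹) :: l) := by
  induction hg using Subgroup.closure_induction generalizing a with
  | mem c hc =>
    have h := LHR.pair_conj_entry hc (c*a*c⁻¹) (by
      calc (c*a*c⁻¹) * (c*a*c⁻¹) = c * (a*a) * c⁻¹ := by group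
      _ = 1 := by rw [ha]; group)
    have e : c⁻¹*(c*a*c⁻¹)*c = a := by group
    rw [e] at h
    exact h.symm
  | one => simpa using LHR.refl _
  | mul g h hg2 hh2 ihg ihh =>
    have h1 := ihh a ha
    have h2 := ihg (h*a*h⁻¹) (by
      calc (h*a*h⁻¹) * (h*a*h⁻¹) = h * (a*a) * h⁻¹ := by group
      _ = 1 := by rw [ha]; group)
    have e : g*(h*a*h⁻¹)*g⁻¹ = (g*h)*a*(g*h)⁻¹ := by group
    rw [e] at h2
    exact h1.trans h2
  | inv g hg2 ihg =>
    have h := ihg (g⁻¹*a*g) (by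
      calc (g⁻¹*a*g) * (g⁻¹*a*g) = g⁻¹ * (a*a) * g := by group
      _ = 1 := by rw [ha]; group)
    have e : g*(g⁻¹*a*g)*g⁻¹ = a := by group
    have e2 : g⁻¹*a*(g⁻¹)⁻¹ = g⁻¹*a*g := by group
    rw [e] at h
    rw [e2]
    exact h.symm

/-- Functoriality of `LHR` under group homomorphisms. -/
theorem LHR.map {H : Type*} [Group H] (f : G →* H) {l l' : List G} (h : LHR l l') :
    LHR (l.map f) (l'.map f) := by
  induction h with
  | refl => exact LHR.refl _
  | tail _ h2 ih =>
    refine ih.trans (Relation.ReflTransGen.single ?_)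
    obtain ⟨l₁, a, b, l₂, ⟨h1, h2'⟩ | ⟨h1, h2'⟩⟩ := h2
    · exact ⟨l₁.map f, f a, f b, l₂.map f, Or.inl (by simp [h1, h2'])⟩
    · exact ⟨l₁.map f, f a, f b, l₂.map f, Or.inr (by simp [h1, h2'])⟩


-- getElem of ofFn
theorem ofFn_entry {n : ℕ} (w : Fin n → G) (L : List G) (h : List.ofFn w = L)
    (j : Fin n) (k : ℕ) (hkj : (j : ℕ) = k) (hk' : k < L.length) : w j = L[k] := by
  subst hkj; subst h
  simp

theorem eq_hmove_of_decomp {n : ℕ} (u v : Fin n → G) (l₁ : List G) (a b : G) (l₂ : List G)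
    (hu : List.ofFn u = l₁ ++ a :: b :: l₂)
    (hv : List.ofFn v = l₁ ++ (a*b*a⁻¹) :: a :: l₂) :
    ∃ hi : l₁.length + 1 < n, v = hmove l₁.length hi u := by
  set i := l₁.length with hidef
  have hlen : n = i + 2 + l₂.length := by
    have := congrArg List.length hu
    simp at this
    omega
  have hlen1 : (l₁ ++ a :: b :: l₂).length = n := by simp; omega
  have hlen2 : (l₁ ++ (a*b*a⁻¹) :: a :: l₂).length = n := by simp; omega
  have hi : i + 1 < n := by omega
  refine ⟨hi, ?_⟩
  have hu_i : u ⟨i, by omega⟩ = a := by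
    rw [ofFn_entry u _ hu _ i rfl (by omega)]
    rw [List.getElem_append_right (by omega)]
    simp [hidef]
  have hu_i1 : u ⟨i + 1, hi⟩ = b := by
    rw [ofFn_entry u _ hu _ (i+1) rfl (by omega)]
    rw [List.getElem_append_right (by omega)]
    simp [hidef]
  funext j
  show v j = hmove i hi u j
  unfold hmove
  by_cases h1 : (j : ℕ) = i
  · simp only [h1, if_pos rfl]
    rw [ofFn_entry v _ hv j i h1 (by omega)]
    rw [List.getElem_append_right (by omega)]
    simp [hu_i, hu_i1, ← hidef]
  · by_cases h2 : (j : ℕ) = i + 1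
    · simp only [h1, h2, if_neg h1, if_pos rfl]
      rw [ofFn_entry v _ hv j (i+1) h2 (by omega)]
      rw [List.getElem_append_right (by omega)]
      simp [hu_i, ← hidef]
    · rw [if_neg h1, if_neg h2]
      rw [ofFn_entry v _ hv j j.1 rfl (by omega),
        ofFn_entry u _ hu j j.1 rfl (by omega)]
      by_cases h3 : (j : ℕ) < i
      · rw [List.getElem_append_left (by omega), List.getElem_append_left (by omega)]
      · rw [List.getElem_append_right (by omega), List.getElem_append_right (by omega)]
        set m := (j : ℕ) - i - 2 with hm
        have e : (j : ℕ) - l₁.length = m + 2 := by omega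
        simp only [e]
        simp

theorem hstep_of_lstep {n : ℕ} {u v : Fin n → G}
    (h : lstep (List.ofFn u) (List.ofFn v)) : hstep u v := by
  obtain ⟨l₁, a, b, l₂, ⟨h1, h2⟩ | ⟨h1, h2⟩⟩ := h
  · obtain ⟨hi, he⟩ := eq_hmove_of_decomp u v l₁ a b l₂ h1 h2
    exact ⟨l₁.length, hi, Or.inl he⟩
  · obtain ⟨hi, he⟩ := eq_hmove_of_decomp v u l₁ a b l₂ h1 h2
    exact ⟨l₁.length, hi, Or.inr he⟩

theorem lstep.length' {l l' : List G} (h : lstep l l') : l.length = l'.length := by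
  obtain ⟨l₁, x, y, l₂, h | h⟩ := h <;> simp [h.1, h.2]

theorem LHR.length'' {l l' : List G} (h : LHR l l') : l.length = l'.length := by
  induction h with
  | refl => rfl
  | tail _ h2 ih => exact ih.trans h2.length'

theorem hurwitzEquiv_of_LHR {n : ℕ} {s t : Fin n → G}
    (h : LHR (List.ofFn s) (List.ofFn t)) : HurwitzEquiv s t := by
  suffices key : ∀ L, LHR (List.ofFn s) L → ∀ w : Fin n → G, List.ofFn w = L →
      HurwitzEquiv s w from key _ h t rfl
  intro L h
  induction h with
  | refl =>
    intro w hw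
    have : w = s := by
      funext j
      rw [ofFn_entry w _ hw j j.1 rfl (by simp), ofFn_entry s _ rfl j j.1 rfl (by simp)]
    rw [this]
    exact Relation.ReflTransGen.refl
  | @tail b c h1 h2 ih =>
    intro w hw
    have hblen : b.length = n := by
      have h3 := LHR.length'' h1
      simpa using h3.symm
    set bf : Fin n → G := fun j => b[j.1]'(by omega) with hbf
    have hofn : List.ofFn bf = b := by
      apply List.ext_getElem
      · simp [hblen]
      · intro k h1' h2'
        simp [hbf]
    have ih1 : HurwitzEquiv s bf := ih bf hofn
    have h2' : lstep (List.ofFn bf) (List.ofFn w) := by rw [hofn, hw]; exact h2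
    exact Relation.ReflTransGen.tail ih1 (hstep_of_lstep h2')


open Equiv Equiv.Perm

variable {α : Type*} [DecidableEq α]

theorem isSwap_conj {x : Perm α} (hx : x.IsSwap) (g : Perm α) : (g * x * g⁻¹).IsSwap := by
  obtain ⟨p, q, hpq, rfl⟩ := hx
  exact ⟨g p, g q, fun h => hpq (g.injective h), (swap_apply_apply g p q).symm⟩

theorem lstep.isSwap {l l' : List (Perm α)} (h : lstep l l')
    (hl : ∀ x ∈ l, x.IsSwap) : ∀ x ∈ l', x.IsSwap := by
  obtain ⟨l₁, a, b, l₂, ⟨h1, h2⟩ | ⟨h1, h2⟩⟩ := h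
  · subst h1; subst h2
    intro x hx
    simp only [List.mem_append, List.mem_cons] at hx
    rcases hx with h3 | h3 | h3 | h3
    · exact hl x (by simp [h3])
    · rw [h3]; exact isSwap_conj (hl b (by simp)) a
    · rw [h3]; exact hl a (by simp)
    · exact hl x (by simp [h3])
  · subst h1; subst h2
    intro x hx
    simp only [List.mem_append, List.mem_cons] at hx
    have ha : a.IsSwap := hl a (by simp)
    have hab : (a*b*a⁻¹).IsSwap := hl (a*b*a⁻¹) (by simp)
    rcases hx with h3 | h3 | h3 | h3
    · exact hl x (by simp [h3])
    · rw [h3]; exact ha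
    · have e : b = a⁻¹ * (a*b*a⁻¹) * a := by group
      have := isSwap_conj hab a⁻¹
      rw [inv_inv] at this
      rw [h3]; rw [e]; exact this
    · exact hl x (by simp [h3])

theorem LHR.isSwap {l l' : List (Perm α)} (h : LHR l l')
    (hl : ∀ x ∈ l, x.IsSwap) : ∀ x ∈ l', x.IsSwap := by
  induction h with
  | refl => exact hl
  | tail _ h2 ih => exact h2.isSwap ih

/-- In the closure of a set of transpositions, if some element maps `u` to `v ≠ u`, then
`swap u v` lies in the closure. -/
theorem swap_mem_closure {S : Set (Perm α)} (hS : ∀ x ∈ S, x.IsSwap) :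
    ∀ g ∈ Subgroup.closure S, ∀ u v : α, u ≠ v → g u = v →
      Equiv.swap u v ∈ Subgroup.closure S := by
  intro g hg
  induction hg using Subgroup.closure_induction with
  | mem x hx =>
    intro u v huv hxu
    obtain ⟨p, q, hpq, rfl⟩ := hS x hx
    by_cases h1 : u = p
    · subst h1
      rw [swap_apply_left] at hxu
      rw [← hxu]
      exact Subgroup.subset_closure hx
    · by_cases h2 : u = q
      · subst h2
        rw [swap_apply_right] at hxu
        rw [← hxu, swap_comm]
        exact Subgroup.subset_closure hx
      · rw [swap_apply_of_ne_of_ne h1 h2] at hxu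
        exact absurd hxu huv
  | one => intro u v huv h1; exact absurd h1 huv
  | mul g h _ _ ihg ihh =>
    intro u v huv h1
    rw [Equiv.Perm.mul_apply] at h1
    by_cases hw : h u = u
    · exact ihg u v huv (by rw [hw] at h1; exact h1)
    · have hsw : Equiv.swap u (h u) ∈ Subgroup.closure S := ihh u (h u) (Ne.symm hw) rfl
      by_cases hv : h u = v
      · rw [← hv]; exact hsw
      · have hsv : Equiv.swap (h u) v ∈ Subgroup.closure S := ihg (h u) v hv h1
        have e : Equiv.swap u v =
            Equiv.swap (h u) v * Equiv.swap u (h u) * (Equiv.swap (h u) v)⁻¹ := by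
          rw [← swap_apply_apply]
          congr 1
          · rw [swap_apply_of_ne_of_ne (Ne.symm hw) huv]
          · rw [swap_apply_left]
        rw [e]
        exact mul_mem (mul_mem hsv hsw) (inv_mem hsv)
  | inv g _ ihg =>
    intro u v huv h1
    have h2 : g v = u := by
      rw [← h1]
      simp
    rw [swap_comm]
    exact ihg v u (Ne.symm huv) h2

theorem list_prod_fix {l : List (Perm α)} {w : α} (h : ∀ x ∈ l, x w = w) :
    l.prod w = w := by
  induction l with
  | nil => simp
  | cons a m ih =>
    simp only [List.prod_cons, Equiv.Perm.mul_apply]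
    rw [ih (fun x hx => h x (by simp [hx])), h a (by simp)]

theorem closure_fix {S : Set (Perm α)} {w : α} (h : ∀ x ∈ S, x w = w) :
    ∀ g ∈ Subgroup.closure S, g w = w := by
  intro g hg
  induction hg using Subgroup.closure_induction with
  | mem x hx => exact h x hx
  | one => simp
  | mul a b _ _ iha ihb => simp [Equiv.Perm.mul_apply, ihb, iha]
  | inv a _ iha =>
    conv_lhs => rw [← iha]
    simp


section Reduce

variable {d : ℕ}

open Equiv Equiv.Perm

local notation "ω" => Fin.last d

/-- predicate: moves the last point -/
def Mv (d : ℕ) (x : Perm (Fin (d+1))) : Bool := decide (x (Fin.last d) ≠ Fin.last d)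

theorem swap_form {x : Perm (Fin (d+1))} (hx : x.IsSwap) (hmv : x ω ≠ ω) :
    ∃ a, a ≠ ω ∧ x = Equiv.swap a ω := by
  obtain ⟨p, q, hpq, rfl⟩ := hx
  by_cases hp : p = ω
  · subst hp
    exact ⟨q, Ne.symm hpq, Equiv.swap_comm _ _⟩
  · by_cases hq : q = ω
    · subst hq
      exact ⟨p, hpq, rfl⟩
    · rw [swap_apply_of_ne_of_ne (Ne.symm hp) (Ne.symm hq)] at hmv
      exact absurd rfl hmv

theorem conj_swap_fix {g : Perm (Fin (d+1))} (hg : g ω = ω) (a : Fin (d+1)) :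
    g * Equiv.swap a ω * g⁻¹ = Equiv.swap (g a) ω := by
  rw [← swap_apply_apply, hg]

theorem fix_ne {g : Perm (Fin (d+1))} (hg : g ω = ω) {a : Fin (d+1)} (ha : a ≠ ω) :
    g a ≠ ω := by
  intro h
  exact ha (g.injective (h.trans hg.symm))

theorem third_point (hd : 2 ≤ d) (a b : Fin (d+1)) : ∃ c, c ≠ a ∧ c ≠ b := by
  have h0 : (0 : ℕ) < d + 1 := by omega
  have h1 : (1 : ℕ) < d + 1 := by omega
  have h2 : (2 : ℕ) < d + 1 := by omega
  by_cases e0 : (⟨0, h0⟩ : Fin (d+1)) ≠ a ∧ (⟨0, h0⟩ : Fin (d+1)) ≠ b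
  · exact ⟨_, e0⟩
  by_cases e1 : (⟨1, h1⟩ : Fin (d+1)) ≠ a ∧ (⟨1, h1⟩ : Fin (d+1)) ≠ b
  · exact ⟨_, e1⟩
  by_cases e2 : (⟨2, h2⟩ : Fin (d+1)) ≠ a ∧ (⟨2, h2⟩ : Fin (d+1)) ≠ b
  · exact ⟨_, e2⟩
  exfalso
  push_neg at e0 e1 e2
  rcases eq_or_ne (⟨0, h0⟩ : Fin (d+1)) a with ha0 | ha0
  · rcases eq_or_ne (⟨1, h1⟩ : Fin (d+1)) a with ha1 | ha1
    · have : (⟨0, h0⟩ : Fin (d+1)) = ⟨1, h1⟩ := ha0.trans ha1.symm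
      simp [Fin.ext_iff] at this
    · have hb1 := e1 ha1
      rcases eq_or_ne (⟨2, h2⟩ : Fin (d+1)) a with ha2 | ha2
      · have : (⟨0, h0⟩ : Fin (d+1)) = ⟨2, h2⟩ := ha0.trans ha2.symm
        simp [Fin.ext_iff] at this
      · have hb2 := e2 ha2
        have : (⟨1, h1⟩ : Fin (d+1)) = ⟨2, h2⟩ := hb1.trans hb2.symm
        simp [Fin.ext_iff] at this
  · have hb0 := e0 ha0
    rcases eq_or_ne (⟨1, h1⟩ : Fin (d+1)) a with ha1 | ha1
    · rcases eq_or_ne (⟨2, h2⟩ : Fin (d+1)) a with ha2 | ha2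
      · have : (⟨1, h1⟩ : Fin (d+1)) = ⟨2, h2⟩ := ha1.trans ha2.symm
        simp [Fin.ext_iff] at this
      · have hb2 := e2 ha2
        have : (⟨0, h0⟩ : Fin (d+1)) = ⟨2, h2⟩ := hb0.trans hb2.symm
        simp [Fin.ext_iff] at this
    · have hb1 := e1 ha1
      have : (⟨0, h0⟩ : Fin (d+1)) = ⟨1, h1⟩ := hb0.trans hb1.symm
      simp [Fin.ext_iff] at this

theorem split_first {β : Type*} (p : β → Prop) [DecidablePred p] :
    ∀ l : List β, (∃ x ∈ l, p x) →
      ∃ l₀ y l₁, l = l₀ ++ y :: l₁ ∧ (∀ z ∈ l₀, ¬ p z) ∧ p y := by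
  intro l
  induction l with
  | nil => rintro ⟨x, hx, _⟩; simp at hx
  | cons a m ih =>
    intro hex
    by_cases hpa : p a
    · exact ⟨[], a, m, by simp, by simp, hpa⟩
    · obtain ⟨x, hx, hpx⟩ := hex
      rcases List.mem_cons.mp hx with rfl | hx'
      · exact absurd hpx hpa
      · obtain ⟨l₀, y, l₁, he, h0, hy⟩ := ih ⟨x, hx', hpx⟩
        refine ⟨a :: l₀, y, l₁, by simp [he], ?_, hy⟩
        intro z hz
        rcases List.mem_cons.mp hz with rfl | hz'
        · exact hpa
        · exact h0 z hz'

theorem trans_transport {l l' : List (Perm (Fin (d+1)))} (h : LHR l l')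
    (ht : ∀ u v : Fin (d+1), ∃ p ∈ Subgroup.closure {x | x ∈ l}, p u = v) :
    ∀ u v : Fin (d+1), ∃ p ∈ Subgroup.closure {x | x ∈ l'}, p u = v := by
  intro u v
  rw [← h.closure_eq]
  exact ht u v

/-- Main reduction: a transitive list of transpositions can be brought to the form where
either exactly one entry (at the head) moves the last point, or exactly two (equal,
at the head) do. -/
theorem reduce (hd : 2 ≤ d) :
    ∀ k : ℕ, ∀ l : List (Perm (Fin (d+1))),
    (∀ x ∈ l, x.IsSwap) →
    (∀ u v : Fin (d+1), ∃ p ∈ Subgroup.closure {x | x ∈ l}, p u = v) →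
    l.countP (Mv d) = k → 1 ≤ k →
    ∃ (m : List (Perm (Fin (d+1)))) (a : Fin (d+1)), a ≠ ω ∧
      (∀ x ∈ m, x.IsSwap ∧ x ω = ω) ∧
      (LHR l (Equiv.swap a ω :: m) ∨
       LHR l (Equiv.swap a ω :: Equiv.swap a ω :: m)) := by
  intro k
  induction k using Nat.strong_induction_on with
  | _ k ih =>
    intro l hsw htr hcount hk1
    -- split off first moving entry
    have hex : ∃ x ∈ l, Mv d x = true := by
      apply List.countP_pos_iff.mp; omega
    obtain ⟨l₀, y, l₁, rfl, h0, hy⟩ := split_first (fun x => Mv d x = true) l hex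
    have h0' : ∀ z ∈ l₀, z ω = ω := by
      intro z hz
      have := h0 z hz
      simpa [Mv] using this
    have hyy : y ω ≠ ω := by simpa [Mv] using hy
    obtain ⟨a₀, ha₀, rfl⟩ := swap_form (hsw y (by simp)) hyy
    have hc : l₀.prod ω = ω := list_prod_fix h0'
    -- pull to front
    have hpull := LHR.pull_front l₀ (Equiv.swap a₀ ω) l₁
    rw [conj_swap_fix hc] at hpull
    set a' := l₀.prod a₀ with ha'def
    have ha' : a' ≠ ω := fix_ne hc ha₀
    set rest := l₀ ++ l₁ with hrest
    have hcount0 : l₀.countP (Mv d) = 0 := by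
      rw [List.countP_eq_zero]
      intro z hz
      simpa [Mv] using h0' z hz
    have hcountrest : rest.countP (Mv d) = k - 1 := by
      have h := hcount
      rw [List.countP_append, List.countP_cons, hcount0] at h
      have hy1 : Mv d (Equiv.swap a₀ ω) = true := hy
      rw [hy1] at h
      simp at h
      rw [hrest, List.countP_append, hcount0]
      omega
    have hswrest : ∀ x ∈ rest, x.IsSwap := by
      intro x hx
      rw [hrest, List.mem_append] at hx
      rcases hx with hx | hx
      · exact hsw x (by simp [hx])
      · exact hsw x (by simp [hx])
    by_cases hk2 : k = 1
    · -- single case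
      refine ⟨rest, a', ha', ?_, Or.inl hpull⟩
      intro x hx
      refine ⟨hswrest x hx, ?_⟩
      have : rest.countP (Mv d) = 0 := by omega
      rw [List.countP_eq_zero] at this
      have := this x hx
      simpa [Mv] using this
    · -- k ≥ 2 : find second moving entry in rest
      have hk2' : 2 ≤ k := by omega
      have hex2 : ∃ x ∈ rest, Mv d x = true := by
        apply List.countP_pos_iff.mp; omega
      obtain ⟨m₀, z, m₁, hresteq, hm0, hz⟩ := split_first (fun x => Mv d x = true) rest hex2
      have hm0' : ∀ w ∈ m₀, w ω = ω := by
        intro w hw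
        have := hm0 w hw
        simpa [Mv] using this
      have hzz : z ω ≠ ω := by simpa [Mv] using hz
      obtain ⟨b₀, hb₀, rfl⟩ := swap_form (hswrest z (by rw [hresteq]; simp)) hzz
      have hc₂ : m₀.prod ω = ω := list_prod_fix hm0'
      have hpull2 := LHR.pull_front m₀ (Equiv.swap b₀ ω) m₁
      rw [conj_swap_fix hc₂] at hpull2
      set b' := m₀.prod b₀ with hb'def
      have hb' : b' ≠ ω := fix_ne hc₂ hb₀
      set r := m₀ ++ m₁ with hr
      have hLHR2 : LHR (l₀ ++ Equiv.swap a₀ ω :: l₁)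
          (Equiv.swap a' ω :: Equiv.swap b' ω :: r) := by
        refine hpull.trans ?_
        rw [hresteq]
        exact hpull2.cons _
      have hcountr : r.countP (Mv d) = k - 2 := by
        have hm0c : m₀.countP (Mv d) = 0 := by
          rw [List.countP_eq_zero]
          intro w hw
          simpa [Mv] using hm0' w hw
        have h := hcountrest
        rw [hresteq, List.countP_append, List.countP_cons, hm0c] at h
        have hz1 : Mv d (Equiv.swap b₀ ω) = true := hz
        rw [hz1] at h
        simp at h
        rw [hr, List.countP_append, hm0c]
        omega
      have hswr : ∀ x ∈ r, x.IsSwap := by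
        intro x hx
        rw [hr, List.mem_append] at hx
        apply hswrest
        rw [hresteq]
        rcases hx with hx | hx
        · simp [hx]
        · simp [hx]
      by_cases hab : b' = a'
      · -- equal: pair at the front
        rw [← hab] at ha' hLHR2
        by_cases hk3 : k = 2
        · refine ⟨r, b', ha', ?_, Or.inr hLHR2⟩
          intro x hx
          refine ⟨hswr x hx, ?_⟩
          have : r.countP (Mv d) = 0 := by omega
          rw [List.countP_eq_zero] at this
          have := this x hx
          simpa [Mv] using this
        · -- k ≥ 3
          have hk3' : 3 ≤ k := by omega
          have hswb : Equiv.swap b' ω * Equiv.swap b' ω = 1 := Equiv.swap_mul_self _ _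
          -- find either a moving entry of r different from swap b' ω,
          -- or (bad case) first conjugate the pair
          have step2 : ∃ u : Perm (Fin (d+1)), u.IsSwap ∧ u ω = ω ∧
              LHR (Equiv.swap b' ω :: Equiv.swap b' ω :: r) (u :: u :: r) := by
            by_cases hgood : ∃ w ∈ r, Mv d w = true ∧ w ≠ Equiv.swap b' ω
            · obtain ⟨w, hwr, hwmv, hwne⟩ := hgood
              have hwsw := hswr w hwr
              have hwmv' : w ω ≠ ω := by simpa [Mv] using hwmv
              obtain ⟨e₀, he₀, rfl⟩ := swap_form hwsw hwmv'
              have hne : e₀ ≠ b' := by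
                intro h
                exact hwne (by rw [h])
              have hconj := LHR.pair_conj_entry hwr (Equiv.swap b' ω) hswb
              have hwinv : (Equiv.swap e₀ ω)⁻¹ = Equiv.swap e₀ ω := Equiv.swap_inv _ _
              have hval : (Equiv.swap e₀ ω)⁻¹ * Equiv.swap b' ω * Equiv.swap e₀ ω =
                  Equiv.swap b' e₀ := by
                rw [hwinv]
                have : Equiv.swap e₀ ω * Equiv.swap b' ω * (Equiv.swap e₀ ω)⁻¹ =
                    Equiv.swap (Equiv.swap e₀ ω b') (Equiv.swap e₀ ω ω) :=
                  (swap_apply_apply _ _ _).symm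
                rw [hwinv] at this
                rw [this, swap_apply_of_ne_of_ne (Ne.symm hne) hb', Equiv.swap_apply_right]
              rw [hval] at hconj
              refine ⟨Equiv.swap b' e₀, ⟨b', e₀, Ne.symm hne, rfl⟩, ?_, hconj⟩
              rw [swap_apply_of_ne_of_ne (Ne.symm ha') (Ne.symm he₀)]
            · -- bad case: all moving entries of r are equal to swap b' ω
              push_neg at hgood
              have hbad : ∃ c ∈ r, c ω = ω ∧ c b' ≠ b' := by
                by_contra hno
                push_neg at hno
                -- closure preserves {b', ω}
                have hinv : ∀ g ∈ Subgroup.closure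
                    {x | x ∈ Equiv.swap b' ω :: Equiv.swap b' ω :: r},
                    (g b' = b' ∨ g b' = ω) ∧ (g ω = b' ∨ g ω = ω) := by
                  intro g hg
                  induction hg using Subgroup.closure_induction with
                  | mem x hx =>
                    simp only [Set.mem_setOf_eq, List.mem_cons] at hx
                    rcases hx with rfl | rfl | hxr
                    · constructor
                      · right; exact Equiv.swap_apply_left _ _
                      · left; exact Equiv.swap_apply_right _ _
                    · constructor
                      · right; exact Equiv.swap_apply_left _ _
                      · left; exact Equiv.swap_apply_right _ _
                    · by_cases hxmv : Mv d x = true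
                      · have := hgood x hxr hxmv
                        rw [this]
                        constructor
                        · right; exact Equiv.swap_apply_left _ _
                        · left; exact Equiv.swap_apply_right _ _
                      · have hfix : x ω = ω := by
                          simp [Mv] at hxmv
                          exact hxmv
                        have := hno x hxr hfix
                        exact ⟨Or.inl this, Or.inr hfix⟩
                  | one => exact ⟨Or.inl rfl, Or.inr rfl⟩
                  | mul g h _ _ ihg ihh =>
                    obtain ⟨ihg1, ihg2⟩ := ihg
                    obtain ⟨ihh1, ihh2⟩ := ihh
                    constructor
                    · rcases ihh1 with h1 | h1 <;> rw [Equiv.Perm.mul_apply, h1]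
                      · exact ihg1
                      · exact ihg2
                    · rcases ihh2 with h1 | h1 <;> rw [Equiv.Perm.mul_apply, h1]
                      · exact ihg1
                      · exact ihg2
                  | inv g _ ihg =>
                    obtain ⟨ihg1, ihg2⟩ := ihg
                    rcases ihg1 with h1 | h1 <;> rcases ihg2 with h2 | h2
                    · exfalso; exact ha' (g.injective (h1.trans h2.symm))
                    · refine ⟨Or.inl ?_, Or.inr ?_⟩
                      · rw [Equiv.Perm.inv_eq_iff_eq]; exact h1.symm
                      · rw [Equiv.Perm.inv_eq_iff_eq]; exact h2.symm
                    · refine ⟨Or.inr ?_, Or.inl ?_⟩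
                      · rw [Equiv.Perm.inv_eq_iff_eq]; exact h2.symm
                      · rw [Equiv.Perm.inv_eq_iff_eq]; exact h1.symm
                    · exfalso
                      exact ha' (g.injective (h1.trans h2.symm))
                obtain ⟨v₀, hv₀1, hv₀2⟩ := third_point hd b' ω
                have htr2 := trans_transport hLHR2 htr
                obtain ⟨p, hp, hpv⟩ := htr2 b' v₀
                have := (hinv p hp).1
                rcases this with h1 | h1
                · exact hv₀1 (hpv.symm.trans h1)
                · exact hv₀2 (hpv.symm.trans h1)
              obtain ⟨c, hcr, hcfix, hcb⟩ := hbad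
              -- conjugate the pair by c
              have hconj := LHR.pair_conj_entry hcr (Equiv.swap b' ω) hswb
              have hval : c⁻¹ * Equiv.swap b' ω * c = Equiv.swap (c⁻¹ b') ω := by
                have h1 : c⁻¹ ω = ω := by
                  rw [Equiv.Perm.inv_eq_iff_eq]; exact hcfix.symm
                rw [← conj_swap_fix h1 b']
                simp
              rw [hval] at hconj
              set b'' := c⁻¹ b' with hb''
              have hb''ne : b'' ≠ b' := by
                intro h
                apply hcb
                have h2 := congrArg c h
                rw [hb''] at h2
                simpa using h2.symm
              have hb''ω : b'' ≠ ω := by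
                intro h
                have : b' = c ω := by
                  rw [← h, hb'']; simp
                rw [hcfix] at this
                exact hb' this
              -- r contains a moving entry, which must equal swap b' ω ≠ swap b'' ω
              have hexr : ∃ w ∈ r, Mv d w = true := by
                apply List.countP_pos_iff.mp; omega
              obtain ⟨w, hwr, hwmv⟩ := hexr
              have hweq : w = Equiv.swap b' ω := hgood w hwr hwmv
              have hswb'' : Equiv.swap b'' ω * Equiv.swap b'' ω = 1 := Equiv.swap_mul_self _ _
              have hconj2 := LHR.pair_conj_entry (hweq ▸ hwr) (Equiv.swap b'' ω) hswb''
              have hwinv : (Equiv.swap b' ω)⁻¹ = Equiv.swap b' ω := Equiv.swap_inv _ _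
              have hval2 : (Equiv.swap b' ω)⁻¹ * Equiv.swap b'' ω * Equiv.swap b' ω =
                  Equiv.swap b'' b' := by
                rw [hwinv]
                have h2 : Equiv.swap b' ω * Equiv.swap b'' ω * (Equiv.swap b' ω)⁻¹ =
                    Equiv.swap (Equiv.swap b' ω b'') (Equiv.swap b' ω ω) :=
                  (swap_apply_apply _ _ _).symm
                rw [hwinv] at h2
                rw [h2, swap_apply_of_ne_of_ne hb''ne hb''ω, Equiv.swap_apply_right]
              rw [hval2] at hconj2
              refine ⟨Equiv.swap b'' b', ⟨b'', b', hb''ne, rfl⟩, ?_, hconj.trans hconj2⟩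
              rw [swap_apply_of_ne_of_ne (Ne.symm hb''ω) (Ne.symm ha')]
          obtain ⟨u, husw, hufix, huLHR⟩ := step2
          -- recurse at k - 2
          set L₃ := u :: u :: r with hL₃
          have hLHR3 : LHR (l₀ ++ Equiv.swap a₀ ω :: l₁) L₃ := hLHR2.trans huLHR
          have hcount3 : L₃.countP (Mv d) = k - 2 := by
            rw [hL₃, List.countP_cons, List.countP_cons]
            have hu0 : Mv d u = false := by
              simp [Mv, hufix]
            rw [hu0, hcountr]
            simp
          have hsw3 : ∀ x ∈ L₃, x.IsSwap := LHR.isSwap hLHR3 hsw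
          have htr3 := trans_transport hLHR3 htr
          obtain ⟨m, a, ham, hmsw, hres⟩ := ih (k - 2) (by omega) L₃ hsw3 htr3 hcount3 (by omega)
          refine ⟨m, a, ham, hmsw, ?_⟩
          rcases hres with hres | hres
          · exact Or.inl (hLHR3.trans hres)
          · exact Or.inr (hLHR3.trans hres)
      · -- unequal: combine to reduce the count by one
        have hbasic := LHR.basic (Equiv.swap a' ω) (Equiv.swap b' ω) r
        have hainv : (Equiv.swap a' ω)⁻¹ = Equiv.swap a' ω := Equiv.swap_inv _ _
        have hval : Equiv.swap a' ω * Equiv.swap b' ω * (Equiv.swap a' ω)⁻¹ =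
            Equiv.swap b' a' := by
          have h2 : Equiv.swap a' ω * Equiv.swap b' ω * (Equiv.swap a' ω)⁻¹ =
              Equiv.swap (Equiv.swap a' ω b') (Equiv.swap a' ω ω) :=
            (swap_apply_apply _ _ _).symm
          rw [h2, swap_apply_of_ne_of_ne hab hb', Equiv.swap_apply_right]
        rw [hval] at hbasic
        set L₂ := Equiv.swap b' a' :: Equiv.swap a' ω :: r with hL₂
        have hLHR3 : LHR (l₀ ++ Equiv.swap a₀ ω :: l₁) L₂ := hLHR2.trans hbasic
        have hcount2 : L₂.countP (Mv d) = k - 1 := by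
          rw [hL₂, List.countP_cons, List.countP_cons]
          have h1 : Mv d (Equiv.swap b' a') = false := by
            simp only [Mv, decide_eq_false_iff_not, not_not]
            rw [swap_apply_of_ne_of_ne (Ne.symm hb') (Ne.symm ha')]
          have h2 : Mv d (Equiv.swap a' ω) = true := by
            simp only [Mv, decide_eq_true_eq]
            rw [Equiv.swap_apply_right]
            exact ha'
          rw [h1, h2, hcountr]
          simp
          omega
        have hsw2 : ∀ x ∈ L₂, x.IsSwap := LHR.isSwap hLHR3 hsw
        have htr2 := trans_transport hLHR3 htr
        obtain ⟨m, a, ham, hmsw, hres⟩ := ih (k - 1) (by omega) L₂ hsw2 htr2 hcount2 (by omega)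
        refine ⟨m, a, ham, hmsw, ?_⟩
        rcases hres with hres | hres
        · exact Or.inl (hLHR3.trans hres)
        · exact Or.inr (hLHR3.trans hres)

end Reduce

section Embed

variable {d : ℕ}

open Equiv Equiv.Perm

/-- `Fin d` as the subtype of `Fin (d+1)` of elements distinct from `last`. -/
def emb (d : ℕ) : Fin d ≃ {w : Fin (d+1) // w ≠ Fin.last d} where
  toFun u := ⟨u.castSucc, (Fin.castSucc_lt_last u).ne⟩
  invFun w := w.1.castPred w.2
  left_inv u := by simp
  right_inv w := by simp

/-- The embedding `Perm (Fin d) →* Perm (Fin (d+1))`. -/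
def ι (d : ℕ) : Perm (Fin d) →* Perm (Fin (d+1)) := Equiv.Perm.extendDomainHom (emb d)

theorem ι_cast (σ : Perm (Fin d)) (u : Fin d) : ι d σ u.castSucc = (σ u).castSucc := by
  have h := Equiv.Perm.extendDomain_apply_image σ (emb d) u
  exact h

theorem ι_last (σ : Perm (Fin d)) : ι d σ (Fin.last d) = Fin.last d :=
  Equiv.Perm.extendDomain_apply_not_subtype σ (emb d) (by simp)

theorem ι_swap (u v : Fin d) :
    ι d (Equiv.swap u v) = Equiv.swap u.castSucc v.castSucc := by
  apply Equiv.ext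
  intro w
  rcases Fin.eq_castSucc_or_eq_last w with ⟨x, rfl⟩ | rfl
  · rw [ι_cast]
    exact (Function.Injective.swap_apply (Fin.castSucc_injective d) u v x).symm
  · rw [ι_last]
    exact (Equiv.swap_apply_of_ne_of_ne (Fin.castSucc_lt_last u).ne'
      (Fin.castSucc_lt_last v).ne').symm

theorem ι_inj : Function.Injective (ι d) := Equiv.Perm.extendDomainHom_injective (emb d)

theorem exists_lift {x : Perm (Fin (d+1))} (hx : x.IsSwap)
    (hfix : x (Fin.last d) = Fin.last d) :
    ∃ y : Perm (Fin d), y.IsSwap ∧ ι d y = x := by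
  obtain ⟨p, q, hpq, rfl⟩ := hx
  have hp : p ≠ Fin.last d := by
    rintro rfl
    rw [Equiv.swap_apply_left] at hfix
    exact hpq hfix.symm
  have hq : q ≠ Fin.last d := by
    rintro rfl
    rw [Equiv.swap_apply_right] at hfix
    exact hpq hfix
  obtain ⟨p', rfl⟩ := Fin.exists_castSucc_eq.mpr hp
  obtain ⟨q', rfl⟩ := Fin.exists_castSucc_eq.mpr hq
  refine ⟨Equiv.swap p' q', ⟨p', q', ?_, rfl⟩, ι_swap p' q'⟩
  intro h
  exact hpq (by rw [h])

theorem exists_lift_list {m : List (Perm (Fin (d+1)))}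
    (h : ∀ x ∈ m, x.IsSwap ∧ x (Fin.last d) = Fin.last d) :
    ∃ m' : List (Perm (Fin d)), (∀ y ∈ m', y.IsSwap) ∧ m'.map (ι d) = m := by
  induction m with
  | nil => exact ⟨[], by simp, rfl⟩
  | cons x m ihm =>
    obtain ⟨m', hm'1, hm'2⟩ := ihm (fun z hz => h z (by simp [hz]))
    obtain ⟨y, hy1, hy2⟩ := exists_lift (h x (by simp)).1 (h x (by simp)).2
    refine ⟨y :: m', ?_, by simp [hy2, hm'2]⟩
    intro z hz
    rcases List.mem_cons.mp hz with rfl | hz'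
    · exact hy1
    · exact hm'1 z hz'

/-- Transitivity descends to the subtuple of entries fixing the last point. -/
theorem sub_transitive {a : Fin (d+1)} (ha : a ≠ Fin.last d) {m : List (Perm (Fin (d+1)))}
    (hm : ∀ x ∈ m, x (Fin.last d) = Fin.last d)
    (htr : ∀ u v : Fin (d+1),
      ∃ p ∈ Subgroup.closure {x | x ∈ Equiv.swap a (Fin.last d) :: m}, p u = v) :
    ∀ u v : Fin (d+1), u ≠ Fin.last d → v ≠ Fin.last d →
      ∃ p ∈ Subgroup.closure {x | x ∈ m}, p u = v := by
  set ω := Fin.last d with hω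
  set H := Subgroup.closure {x | x ∈ m} with hH
  set Rr := fun (u v : Fin (d+1)) => ∃ p ∈ H, p u = v with hRr
  have rr_refl : ∀ u, Rr u u := fun u => ⟨1, one_mem H, by simp⟩
  have rr_symm : ∀ {u v}, Rr u v → Rr v u := by
    rintro u v ⟨p, hp, hpv⟩
    exact ⟨p⁻¹, inv_mem hp, by rw [Equiv.Perm.inv_eq_iff_eq]; exact hpv.symm⟩
  have rr_trans : ∀ {u v w}, Rr u v → Rr v w → Rr u w := by
    rintro u v w ⟨p, hp, hpv⟩ ⟨q, hq, hqv⟩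
    exact ⟨q * p, mul_mem hq hp, by rw [Equiv.Perm.mul_apply, hpv, hqv]⟩
  set R' := fun (u v : Fin (d+1)) =>
    (u = ω ∧ v = ω) ∨ (u = ω ∧ Rr a v) ∨ (v = ω ∧ Rr u a) ∨ Rr u v with hR'
  have r'_symm : ∀ {u v}, R' u v → R' v u := by
    rintro u v (⟨h1, h2⟩ | ⟨h1, h2⟩ | ⟨h1, h2⟩ | h)
    · exact Or.inl ⟨h2, h1⟩
    · exact Or.inr (Or.inr (Or.inl ⟨h1, rr_symm h2⟩))
    · exact Or.inr (Or.inl ⟨h1, rr_symm h2⟩)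
    · exact Or.inr (Or.inr (Or.inr (rr_symm h)))
  have hfixH : ∀ p ∈ H, p ω = ω := closure_fix (fun x hx => hm x hx)
  have rr_fix1 : ∀ {u}, Rr u ω → u = ω := by
    rintro u ⟨p, hp, hpv⟩
    have h2 := hfixH p hp
    exact p.injective (hpv.trans h2.symm)
  have rr_fix2 : ∀ {u}, Rr ω u → u = ω := by
    rintro u ⟨p, hp, hpv⟩
    rw [hfixH p hp] at hpv
    exact hpv.symm
  have r'_trans : ∀ {u v w}, R' u v → R' v w → R' u w := by
    rintro u v w (⟨h1, h2⟩ | ⟨h1, h2⟩ | ⟨h1, h2⟩ | h) (⟨g1, g2⟩ | ⟨g1, g2⟩ | ⟨g1, g2⟩ | g)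
    · exact Or.inl ⟨h1, g2⟩
    · exact Or.inr (Or.inl ⟨h1, g2⟩)
    · exact Or.inl ⟨h1, g1⟩
    · refine Or.inl ⟨h1, rr_fix2 ?_⟩
      rw [h2] at g
      exact g
    · exact Or.inl ⟨h1, g2⟩
    · exact Or.inr (Or.inl ⟨h1, g2⟩)
    · exact Or.inl ⟨h1, g1⟩
    · exact Or.inr (Or.inl ⟨h1, rr_trans h2 g⟩)
    · exact Or.inr (Or.inr (Or.inl ⟨g2, h2⟩))
    · exact Or.inr (Or.inr (Or.inr (rr_trans h2 g2)))
    · exact Or.inr (Or.inr (Or.inl ⟨g1, h2⟩))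
    · refine Or.inr (Or.inr (Or.inl ⟨?_, h2⟩))
      rw [h1] at g
      exact rr_fix2 g
    · refine Or.inl ⟨?_, g2⟩
      rw [g1] at h
      exact rr_fix1 h
    · refine Or.inr (Or.inl ⟨?_, g2⟩)
      rw [g1] at h
      exact rr_fix1 h
    · exact Or.inr (Or.inr (Or.inl ⟨g1, rr_trans h g2⟩))
    · exact Or.inr (Or.inr (Or.inr (rr_trans h g)))
  have main : ∀ g ∈ Subgroup.closure {x | x ∈ Equiv.swap a ω :: m}, ∀ u, R' u (g u) := by
    intro g hg
    induction hg using Subgroup.closure_induction with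
    | mem x hx =>
      intro u
      simp only [Set.mem_setOf_eq, List.mem_cons] at hx
      rcases hx with rfl | hxm
      · by_cases hu1 : u = a
        · subst hu1
          rw [Equiv.swap_apply_left]
          exact Or.inr (Or.inr (Or.inl ⟨rfl, rr_refl u⟩))
        · by_cases hu2 : u = ω
          · subst hu2
            rw [Equiv.swap_apply_right]
            exact Or.inr (Or.inl ⟨rfl, rr_refl a⟩)
          · rw [Equiv.swap_apply_of_ne_of_ne hu1 hu2]
            exact Or.inr (Or.inr (Or.inr (rr_refl u)))
      · by_cases hu : u = ω
        · subst hu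
          rw [hm x hxm]
          exact Or.inl ⟨rfl, rfl⟩
        · exact Or.inr (Or.inr (Or.inr ⟨x, Subgroup.subset_closure hxm, rfl⟩))
    | one =>
      intro u
      have h1 : (1 : Perm (Fin (d+1))) u = u := rfl
      rw [h1]
      exact Or.inr (Or.inr (Or.inr (rr_refl u)))
    | mul g h _ _ ihg ihh =>
      intro u
      have h1 := r'_trans (ihh u) (ihg (h u))
      rw [← Equiv.Perm.mul_apply] at h1
      exact h1
    | inv g _ ihg =>
      intro u
      have h1 := ihg (g⁻¹ u)
      rw [show g (g⁻¹ u) = u by simp] at h1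
      exact r'_symm h1
  intro u v hu hv
  obtain ⟨q, hq, hqv⟩ := htr u v
  have h1 := main q hq u
  rw [hqv] at h1
  rcases h1 with ⟨h1, _⟩ | ⟨h1, _⟩ | ⟨h1, _⟩ | h1
  · exact absurd h1 hu
  · exact absurd h1 hu
  · exact absurd h1 hv
  · exact h1

end Embed

section Main

open Equiv Equiv.Perm

/-- Descend a comparison of clean lists to `Perm (Fin d)` and come back. -/
theorem descend {d : ℕ}
    (ihd : ∀ s' t' : List (Perm (Fin d)), s'.length = t'.length →
      (∀ x ∈ s', x.IsSwap) → (∀ x ∈ t', x.IsSwap) →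
      (∀ u v : Fin d, ∃ p ∈ Subgroup.closure {x | x ∈ s'}, p u = v) →
      (∀ u v : Fin d, ∃ p ∈ Subgroup.closure {x | x ∈ t'}, p u = v) →
      s'.prod = t'.prod → LHR s' t')
    {ms mt : List (Perm (Fin (d+1)))}
    (hms : ∀ x ∈ ms, x.IsSwap ∧ x (Fin.last d) = Fin.last d)
    (hmt : ∀ x ∈ mt, x.IsSwap ∧ x (Fin.last d) = Fin.last d)
    (hlen : ms.length = mt.length)
    (hprodm : ms.prod = mt.prod)
    (htrs : ∀ u v : Fin (d+1), u ≠ Fin.last d → v ≠ Fin.last d →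
      ∃ p ∈ Subgroup.closure {x | x ∈ ms}, p u = v)
    (htrt : ∀ u v : Fin (d+1), u ≠ Fin.last d → v ≠ Fin.last d →
      ∃ p ∈ Subgroup.closure {x | x ∈ mt}, p u = v) : LHR ms mt := by
  obtain ⟨ms', hms'sw, hmsmap⟩ := exists_lift_list hms
  obtain ⟨mt', hmt'sw, hmtmap⟩ := exists_lift_list hmt
  have hprod' : ms'.prod = mt'.prod := by
    apply ι_inj
    rw [map_list_prod (ι d) ms', map_list_prod (ι d) mt', hmsmap, hmtmap]
    exact hprodm
  have hlen' : ms'.length = mt'.length := by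
    have h1 := congrArg List.length hmsmap
    have h2 := congrArg List.length hmtmap
    simp only [List.length_map] at h1 h2
    omega
  have htr' : ∀ (m' : List (Perm (Fin d))) (m : List (Perm (Fin (d+1)))),
      m'.map (ι d) = m →
      (∀ u v : Fin (d+1), u ≠ Fin.last d → v ≠ Fin.last d →
        ∃ p ∈ Subgroup.closure {x | x ∈ m}, p u = v) →
      ∀ u v : Fin d, ∃ p ∈ Subgroup.closure {x | x ∈ m'}, p u = v := by
    intro m' m hmap htr u v
    obtain ⟨p, hp, hpv⟩ := htr u.castSucc v.castSucc
      (Fin.castSucc_lt_last u).ne (Fin.castSucc_lt_last v).ne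
    have hset : {x | x ∈ m} = (ι d) '' {y | y ∈ m'} := by
      ext x
      simp only [Set.mem_setOf_eq, Set.mem_image, ← hmap, List.mem_map]
    rw [hset, ← MonoidHom.map_closure, Subgroup.mem_map] at hp
    obtain ⟨p', hp', rfl⟩ := hp
    refine ⟨p', hp', ?_⟩
    rw [ι_cast] at hpv
    exact Fin.castSucc_injective d hpv
  have hLHR' := ihd ms' mt' hlen' hms'sw hmt'sw (htr' ms' ms hmsmap htrs)
    (htr' mt' mt hmtmap htrt) hprod'
  have h2 := LHR.map (ι d) hLHR'
  rwa [hmsmap, hmtmap] at h2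

theorem list_main (d : ℕ) (hd : 2 ≤ d) :
    ∀ (s t : List (Perm (Fin d))),
    s.length = t.length →
    (∀ x ∈ s, x.IsSwap) → (∀ x ∈ t, x.IsSwap) →
    (∀ u v : Fin d, ∃ p ∈ Subgroup.closure {x | x ∈ s}, p u = v) →
    (∀ u v : Fin d, ∃ p ∈ Subgroup.closure {x | x ∈ t}, p u = v) →
    s.prod = t.prod → LHR s t := by
  induction d, hd using Nat.le_induction with
  | base =>
    intro s t hlen hs ht _ _ _
    have huniq : ∀ x : Perm (Fin 2), x.IsSwap → x = Equiv.swap 0 1 := by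
      rintro x ⟨a, b, hab, rfl⟩
      fin_cases a <;> fin_cases b <;>
        first
          | exact absurd rfl hab
          | rfl
          | exact Equiv.swap_comm _ _
    have hs' : s = List.replicate s.length (Equiv.swap 0 1) := by
      rw [List.eq_replicate_iff]
      exact ⟨rfl, fun b hb => huniq b (hs b hb)⟩
    have ht' : t = List.replicate t.length (Equiv.swap 0 1) := by
      rw [List.eq_replicate_iff]
      exact ⟨rfl, fun b hb => huniq b (ht b hb)⟩
    rw [hs', ht', hlen]
    exact LHR.refl _
  | succ d hd ih =>
    intro s t hlen hs ht hstr httr hprod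
    have hcount_pos : ∀ (l : List (Perm (Fin (d+1)))),
        (∀ u v : Fin (d+1), ∃ p ∈ Subgroup.closure {x | x ∈ l}, p u = v) →
        1 ≤ l.countP (Mv d) := by
      intro l htr2
      by_contra hcon
      have h0 : l.countP (Mv d) = 0 := by omega
      rw [List.countP_eq_zero] at h0
      have hfix : ∀ x ∈ {x | x ∈ l}, x (Fin.last d) = Fin.last d := by
        intro x hx
        have := h0 x hx
        simpa [Mv] using this
      obtain ⟨p, hp, hpv⟩ := htr2 (Fin.last d) ⟨0, by omega⟩
      rw [closure_fix hfix p hp] at hpv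
      have hne : (Fin.last d) ≠ (⟨0, by omega⟩ : Fin (d+1)) := by
        intro hcon2
        have h5 := congrArg Fin.val hcon2
        simp only [Fin.val_last] at h5
        omega
      exact hne hpv
    obtain ⟨ms, as, has, hms, hcase_s⟩ :=
      reduce hd (s.countP (Mv d)) s hs hstr rfl (hcount_pos s hstr)
    obtain ⟨mt, bt, hbt, hmt, hcase_t⟩ :=
      reduce hd (t.countP (Mv d)) t ht httr rfl (hcount_pos t httr)
    have hprod_single : ∀ (a : Fin (d+1)) (m : List (Perm (Fin (d+1)))),
        (∀ x ∈ m, x (Fin.last d) = Fin.last d) →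
        (Equiv.swap a (Fin.last d) :: m).prod (Fin.last d) = a := by
      intro a m hm
      rw [List.prod_cons, Equiv.Perm.mul_apply, list_prod_fix hm, Equiv.swap_apply_right]
    have hprod_pair : ∀ (a : Fin (d+1)) (m : List (Perm (Fin (d+1)))),
        (Equiv.swap a (Fin.last d) :: Equiv.swap a (Fin.last d) :: m).prod = m.prod := by
      intro a m
      rw [List.prod_cons, List.prod_cons, ← mul_assoc, Equiv.swap_mul_self, one_mul]
    by_cases hμ : s.prod (Fin.last d) = Fin.last d
    · -- total monodromy fixes the last point: both reduce to the pair form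
      rcases hcase_s with hS | hS
      · exfalso
        have h1 := LHR.prod hS
        rw [h1] at hμ
        rw [hprod_single as ms (fun x hx => (hms x hx).2)] at hμ
        exact has hμ
      rcases hcase_t with hT | hT
      · exfalso
        have h1 := LHR.prod hT
        rw [← hprod] at h1
        rw [h1] at hμ
        rw [hprod_single bt mt (fun x hx => (hmt x hx).2)] at hμ
        exact hbt hμ
      -- normalize the pair to a common transposition
      have hz0 : (0 : ℕ) < d := by omega
      set z0 : Fin (d+1) := Fin.castSucc ⟨0, hz0⟩ with hz0def
      have hz0ne : z0 ≠ Fin.last d := (Fin.castSucc_lt_last _).ne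
      have hnorm : ∀ (a : Fin (d+1)) (ha : a ≠ Fin.last d) (m : List (Perm (Fin (d+1))))
          (hm : ∀ x ∈ m, x.IsSwap ∧ x (Fin.last d) = Fin.last d)
          (htrm : ∀ u v : Fin (d+1),
            ∃ p ∈ Subgroup.closure
              {x | x ∈ Equiv.swap a (Fin.last d) :: Equiv.swap a (Fin.last d) :: m}, p u = v),
          (∀ u v : Fin (d+1), u ≠ Fin.last d → v ≠ Fin.last d →
            ∃ p ∈ Subgroup.closure {x | x ∈ m}, p u = v) ∧
          LHR (Equiv.swap a (Fin.last d) :: Equiv.swap a (Fin.last d) :: m)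
            (Equiv.swap z0 (Fin.last d) :: Equiv.swap z0 (Fin.last d) :: m) := by
        intro a ha m hm htrm
        have hseteq : {x | x ∈ Equiv.swap a (Fin.last d) :: Equiv.swap a (Fin.last d) :: m}
            = {x | x ∈ Equiv.swap a (Fin.last d) :: m} := by
          ext x
          simp only [Set.mem_setOf_eq, List.mem_cons]
          tauto
        have htrm' : ∀ u v : Fin (d+1),
            ∃ p ∈ Subgroup.closure {x | x ∈ Equiv.swap a (Fin.last d) :: m}, p u = v := by
          intro u v
          rw [← hseteq]
          exact htrm u v
        have hsub := sub_transitive ha (fun x hx => (hm x hx).2) htrm'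
        refine ⟨hsub, ?_⟩
        obtain ⟨g, hg, hgz⟩ := hsub a z0 ha hz0ne
        have hgfix : g (Fin.last d) = Fin.last d :=
          closure_fix (fun x hx => (hm x hx).2) g hg
        have hpc := LHR.pair_conj_closure hg (Equiv.swap a (Fin.last d))
          (Equiv.swap_mul_self _ _)
        rw [conj_swap_fix hgfix, hgz] at hpc
        exact hpc
      have htrS := trans_transport hS hstr
      have htrT := trans_transport hT httr
      obtain ⟨hsubS, hnormS⟩ := hnorm as has ms hms htrS
      obtain ⟨hsubT, hnormT⟩ := hnorm bt hbt mt hmt htrT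
      have hlenm : ms.length = mt.length := by
        have h1 := LHR.length hS
        have h2 := LHR.length hT
        simp only [List.length_cons] at h1 h2
        omega
      have hprodm : ms.prod = mt.prod := by
        have h1 := LHR.prod hS
        have h2 := LHR.prod hT
        rw [hprod_pair] at h1 h2
        rw [← h1, ← h2, hprod]
      have hdesc := descend ih hms hmt hlenm hprodm hsubS hsubT
      have hfinal : LHR s t := by
        refine (hS.trans (hnormS.trans ?_)).trans (hT.trans hnormT).symm
        exact (hdesc.cons _).cons _
      exact hfinal
    · -- total monodromy moves the last point: both reduce to the single form
      rcases hcase_s with hS | hS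
      swap
      · exfalso
        have h1 := LHR.prod hS
        rw [hprod_pair] at h1
        apply hμ
        rw [h1]
        exact list_prod_fix (fun x hx => (hms x hx).2)
      rcases hcase_t with hT | hT
      swap
      · exfalso
        have h1 := LHR.prod hT
        rw [hprod_pair] at h1
        apply hμ
        rw [hprod, h1]
        exact list_prod_fix (fun x hx => (hmt x hx).2)
      -- the heads agree
      have hheadS : as = s.prod (Fin.last d) := by
        have h1 := LHR.prod hS
        rw [h1, hprod_single as ms (fun x hx => (hms x hx).2)]
      have hheadT : bt = s.prod (Fin.last d) := by
        have h1 := LHR.prod hT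
        rw [← hprod] at h1
        rw [h1, hprod_single bt mt (fun x hx => (hmt x hx).2)]
      have hheads : bt = as := hheadT.trans hheadS.symm
      rw [hheads] at hT
      have hlenm : ms.length = mt.length := by
        have h1 := LHR.length hS
        have h2 := LHR.length hT
        simp only [List.length_cons] at h1 h2
        omega
      have hprodm : ms.prod = mt.prod := by
        have h1 := LHR.prod hS
        have h2 := LHR.prod hT
        rw [List.prod_cons] at h1 h2
        rw [← hprod] at h2
        have h3 : Equiv.swap as (Fin.last d) * ms.prod
            = Equiv.swap as (Fin.last d) * mt.prod := h1.symm.trans h2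
        exact mul_left_cancel h3
      have hsubS := sub_transitive has (fun x hx => (hms x hx).2) (trans_transport hS hstr)
      have hsubT := sub_transitive has (fun x hx => (hmt x hx).2) (trans_transport hT httr)
      have hdesc := descend ih hms hmt hlenm hprodm hsubS hsubT
      exact (hS.trans (hdesc.cons _)).trans hT.symm

end Main

end HurwitzAux

/-- Two transitive `n`-tuples of transpositions in `S_d` with the same total
monodromy are Hurwitz equivalent: the set `T(μ)` of labelings with fixed
product `μ` forms a single connected component of the coloured braid
groupoid. -/
theorem hurwitz_equiv_of_prod_eq (d n : ℕ) (hd : 2 ≤ d)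
    (s t : Fin n → Equiv.Perm (Fin d))
    (hs : ∀ j, (s j).IsSwap) (ht : ∀ j, (t j).IsSwap)
    (hstrans : ∀ x y : Fin d, ∃ p ∈ Subgroup.closure (Set.range s), p x = y)
    (httrans : ∀ x y : Fin d, ∃ p ∈ Subgroup.closure (Set.range t), p x = y)
    (hprod : (List.ofFn s).prod = (List.ofFn t).prod) :
    HurwitzEquiv s t := by
  have hsetS : Set.range s = {x | x ∈ List.ofFn s} := by
    ext x
    simp [List.mem_ofFn, Set.mem_range]
  have hsetT : Set.range t = {x | x ∈ List.ofFn t} := by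
    ext x
    simp [List.mem_ofFn, Set.mem_range]
  apply HurwitzAux.hurwitzEquiv_of_LHR
  refine HurwitzAux.list_main d hd (List.ofFn s) (List.ofFn t) (by simp) ?_ ?_ ?_ ?_ hprod
  · intro x hx
    rw [List.mem_ofFn] at hx
    obtain ⟨j, rfl⟩ := hx
    exact hs j
  · intro x hx
    rw [List.mem_ofFn] at hx
    obtain ⟨j, rfl⟩ := hx
    exact ht j
  · intro u v
    rw [← hsetS]
    exact hstrans u v
  · intro u v
    rw [← hsetT]
    exact httrans u v
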